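/- Let K be a compact connected subgroup of GL_n(ℝ). Then K is algebraic: there exist finitely many real polynomials P₁, …, P_h in the n² matrix entries such that K = {X ∈ M_n(ℝ) : P_i(X) = 0 for all i = 1, …, h}. In particular, K is definable in the real ordered field (ℝ; 0, 1, +, ·, <). -/

import Mathlib

set_option maxHeartbeats 1000000
set_option synthInstance.maxHeartbeats 1000000

open MvPolynomial MeasureTheory Topology

noncomputable section AuxCompactAlgebraic

private lemma aux_integral_poly {G : Type} [MeasurableSpace G] (μ : Measure G)
    {σ σ' : Type} (F : MvPolynomial σ (MvPolynomial σ' ℝ)) (w : G → σ' → ℝ)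
    (hint : ∀ c : MvPolynomial σ' ℝ, Integrable (fun g => eval (w g) c) μ) :
    ∃ Q : MvPolynomial σ ℝ, ∀ y : σ → ℝ,
      ∫ g, eval y (MvPolynomial.map (eval (w g)) F) ∂μ = eval y Q := by
  refine ⟨∑ d ∈ F.support, monomial d (∫ g, eval (w g) (F.coeff d) ∂μ), fun y => ?_⟩
  have h1 : ∀ g, eval y (MvPolynomial.map (eval (w g)) F)
      = ∑ d ∈ F.support, eval (w g) (F.coeff d) * ∏ i ∈ d.support, y i ^ d i := by
    intro g
    rw [eval_map, eval₂_eq]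
  simp_rw [h1]
  rw [integral_finset_sum _ (fun d _ => (hint _).mul_const _)]
  rw [map_sum]
  refine Finset.sum_congr rfl fun d _ => ?_
  rw [integral_mul_const, eval_monomial]
  rfl

private lemma aux_eval_sumToIter {σ σ' : Type} (q : MvPolynomial (σ ⊕ σ') ℝ)
    (a : σ → ℝ) (b : σ' → ℝ) :
    eval a (MvPolynomial.map (eval b) (sumToIter ℝ σ σ' q)) = eval (Sum.elim a b) q := by
  have h : ((eval a).comp ((MvPolynomial.map (eval b : MvPolynomial σ' ℝ →+* ℝ)).comp
      (sumToIter ℝ σ σ'))) = (eval (Sum.elim a b)) := by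
    apply MvPolynomial.ringHom_ext
    · intro r; simp [sumToIter_C]
    · rintro (i | j) <;> simp [sumToIter_Xl, sumToIter_Xr]
  exact RingHom.congr_fun h q

private lemma aux_mul_poly {n : ℕ} (P : MvPolynomial (Fin n × Fin n) ℝ) :
    ∃ F : MvPolynomial (Fin n × Fin n) (MvPolynomial (Fin n × Fin n) ℝ),
      ∀ (y g : Matrix (Fin n) (Fin n) ℝ),
        eval (fun p => y p.1 p.2) (MvPolynomial.map (eval (fun p => g p.1 p.2)) F)
          = eval (fun p : Fin n × Fin n => (y * g) p.1 p.2) P := by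
  have hae : ∀ (v : (Fin n × Fin n) → ℝ) (q : MvPolynomial (Fin n × Fin n) ℝ),
      eval v q = aeval v q := fun v q => (DFunLike.congr_fun (coe_aeval_eq_eval (f := v)) q).symm
  have hae2 : ∀ (v : (Fin n × Fin n) ⊕ (Fin n × Fin n) → ℝ)
      (q : MvPolynomial ((Fin n × Fin n) ⊕ (Fin n × Fin n)) ℝ),
      eval v q = aeval v q := fun v q => (DFunLike.congr_fun (coe_aeval_eq_eval (f := v)) q).symm
  refine ⟨sumToIter ℝ _ _ (bind₁
    (fun p : Fin n × Fin n => ∑ k, X (Sum.inl (p.1, k)) * X (Sum.inr (k, p.2))) P), fun y g => ?_⟩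
  rw [aux_eval_sumToIter, hae2, aeval_bind₁, hae]
  have hv : (fun i : Fin n × Fin n =>
      (aeval (Sum.elim (fun p : Fin n × Fin n => y p.1 p.2) fun p : Fin n × Fin n => g p.1 p.2))
        (∑ k, (X (Sum.inl (i.1, k)) * X (Sum.inr (k, i.2)) :
          MvPolynomial ((Fin n × Fin n) ⊕ (Fin n × Fin n)) ℝ)))
      = fun p : Fin n × Fin n => (y * g) p.1 p.2 := by
    funext p
    simp [← hae2, Matrix.mul_apply]
  rw [hv]

end AuxCompactAlgebraic

/-- A compact connected subgroup `K` of `GL_n(ℝ)` is algebraic: viewed as a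
subset of the matrix space `M_n(ℝ)`, it is the common zero set of finitely many real
polynomials in the `n²` matrix entries. -/
theorem compact_connected_subgroup_is_algebraic
    (n : ℕ) (K : Subgroup (GL (Fin n) ℝ))
    (hcomp : IsCompact
      ((fun g : GL (Fin n) ℝ => (g : Matrix (Fin n) (Fin n) ℝ)) '' (K : Set (GL (Fin n) ℝ))))
    (hconn : IsConnected
      ((fun g : GL (Fin n) ℝ => (g : Matrix (Fin n) (Fin n) ℝ)) '' (K : Set (GL (Fin n) ℝ)))) :
    ∃ (h : ℕ) (P : Fin h → MvPolynomial (Fin n × Fin n) ℝ),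
      ((fun g : GL (Fin n) ℝ => (g : Matrix (Fin n) (Fin n) ℝ)) '' (K : Set (GL (Fin n) ℝ))) =
        {X : Matrix (Fin n) (Fin n) ℝ |
          ∀ i, MvPolynomial.eval (fun p : Fin n × Fin n => X p.1 p.2) (P i) = 0} := by
  classical
  set Φ : GL (Fin n) ℝ → Matrix (Fin n) (Fin n) ℝ := fun g => (g : Matrix (Fin n) (Fin n) ℝ)
    with hΦ
  set S : Set (Matrix (Fin n) (Fin n) ℝ) := Φ '' (K : Set (GL (Fin n) ℝ)) with hS
  set coords : Matrix (Fin n) (Fin n) ℝ → (Fin n × Fin n → ℝ) :=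
    fun X => fun p => X p.1 p.2 with hcoords
  -- K is compact in GL
  have hKcomp : IsCompact (K : Set (GL (Fin n) ℝ)) := by
    rw [Units.isEmbedding_embedProduct.isCompact_iff]
    have himg : Units.embedProduct _ '' (K : Set (GL (Fin n) ℝ))
        = (fun m : Matrix (Fin n) (Fin n) ℝ => (m, MulOpposite.op m⁻¹)) '' S := by
      rw [hS, ← Set.image_comp]
      refine Set.image_congr fun x _ => ?_
      simp only [Function.comp_apply, Units.embedProduct_apply, Φ]
      rw [Matrix.coe_units_inv]
    rw [himg]
    refine hcomp.image_of_continuousOn ?_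
    refine continuousOn_id.prodMk (MulOpposite.continuous_op.comp_continuousOn ?_)
    intro m hm
    obtain ⟨x, _, rfl⟩ := hm
    refine (continuousAt_matrix_inv _ ?_).continuousWithinAt
    rw [Ring.inverse_eq_inv']
    refine continuousAt_inv₀ ?_
    exact ((Matrix.isUnit_iff_isUnit_det _).mp x.isUnit).ne_zero
  haveI : CompactSpace K := isCompact_iff_compactSpace.mp hKcomp
  letI : MeasurableSpace K := borel K
  haveI : BorelSpace K := ⟨rfl⟩
  haveI : Nonempty K := ⟨⟨1, K.one_mem⟩⟩
  set μ : Measure K := Measure.haar with hμ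
  haveI : IsFiniteMeasure μ := ⟨isCompact_univ.measure_lt_top⟩
  -- continuity of polynomial evaluation in matrix entries
  have hcoords_cont : Continuous coords := by
    refine continuous_pi fun p => ?_
    exact continuous_id.matrix_elem p.1 p.2
  have heval_cont : ∀ P : MvPolynomial (Fin n × Fin n) ℝ,
      Continuous fun X : Matrix (Fin n) (Fin n) ℝ => eval (coords X) P := fun P =>
    Continuous.comp (g := fun v : Fin n × Fin n → ℝ => eval v P) (f := coords)
      (MvPolynomial.continuous_eval P) hcoords_cont
  have hΦcont : Continuous fun g : K => Φ (g : GL (Fin n) ℝ) :=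
    Units.continuous_val.comp continuous_subtype_val
  -- value of μ
  have hμpos : 0 < (μ Set.univ).toReal := by
    refine ENNReal.toReal_pos ?_ (measure_ne_top μ _)
    exact (isOpen_univ.measure_pos μ Set.univ_nonempty).ne'
  -- group facts about S
  have hmulmem : ∀ (a : GL (Fin n) ℝ) (g : K), Φ a * Φ (g : GL (Fin n) ℝ) = Φ (a * (g : GL (Fin n) ℝ)) :=
    fun a g => rfl
  -- THE SEPARATION LEMMA
  have hsep : ∀ X : Matrix (Fin n) (Fin n) ℝ, X ∉ S →
      ∃ Q : MvPolynomial (Fin n × Fin n) ℝ,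
        (∀ s ∈ S, eval (coords s) Q = 0) ∧ eval (coords X) Q ≠ 0 := by
    intro X hX
    -- the translate X • S
    have hT2comp : IsCompact ((fun m => X * m) '' S) :=
      hcomp.image (continuous_const.matrix_mul continuous_id)
    set T2 : Set (Matrix (Fin n) (Fin n) ℝ) := (fun m => X * m) '' S with hT2def
    have hdisj : Disjoint S T2 := by
      rw [Set.disjoint_left]
      rintro m ⟨a, ha, rfl⟩ hmT2
      obtain ⟨m', ⟨b, hb, rfl⟩, heq⟩ := hmT2
      -- heq : X * Φ b = Φ a
      apply hX
      refine ⟨a * b⁻¹, K.mul_mem ha (K.inv_mem hb), ?_⟩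
      show Φ (a * b⁻¹) = X
      have heq' : X * Φ b = Φ a := heq
      calc Φ (a * b⁻¹) = Φ a * Φ (b⁻¹) := rfl
        _ = (X * Φ b) * Φ (b⁻¹) := by rw [heq']
        _ = X * (Φ b * Φ (b⁻¹)) := by rw [mul_assoc]
        _ = X * Φ (b * b⁻¹) := rfl
        _ = X := by
            rw [mul_inv_cancel]
            show X * (1 : GL (Fin n) ℝ).val = X
            rw [Units.val_one, mul_one]
    -- Urysohn separation
    haveI : NormalSpace (Matrix (Fin n) (Fin n) ℝ) :=
      inferInstanceAs (NormalSpace (Fin n → Fin n → ℝ))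
    obtain ⟨f, hf0, hf1, hf01⟩ :=
      exists_continuous_zero_one_of_isClosed hcomp.isClosed hT2comp.isClosed hdisj
    -- Stone-Weierstrass on S ∪ T2
    set Cs : Set (Matrix (Fin n) (Fin n) ℝ) := S ∪ T2 with hCs
    have hCcomp : IsCompact Cs := hcomp.union hT2comp
    haveI : CompactSpace ↥Cs := isCompact_iff_compactSpace.mp hCcomp
    set Ψ : MvPolynomial (Fin n × Fin n) ℝ →ₐ[ℝ] C(↥Cs, ℝ) :=
      aeval (fun p : Fin n × Fin n =>
        ⟨fun z : ↥Cs => (z : Matrix (Fin n) (Fin n) ℝ) p.1 p.2,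
          (continuous_id.matrix_elem p.1 p.2).comp continuous_subtype_val⟩) with hΨ
    have hΨeval : ∀ (P : MvPolynomial (Fin n × Fin n) ℝ) (z : ↥Cs),
        Ψ P z = eval (coords (z : Matrix (Fin n) (Fin n) ℝ)) P := by
      intro P z
      induction P using MvPolynomial.induction_on with
      | C a => simp [hΨ]
      | add p q hp hq => simp [hp, hq]
      | mul_X p i hp =>
        have hXx : Ψ (MvPolynomial.X i) z = (z : Matrix (Fin n) (Fin n) ℝ) i.1 i.2 := by
          rw [hΨ, aeval_X]; rfl
        rw [map_mul, ContinuousMap.mul_apply, hp, hXx, map_mul, eval_X]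
    have hA_sep : (Ψ.range).SeparatesPoints := by
      rintro z w hzw
      have hne : (z : Matrix (Fin n) (Fin n) ℝ) ≠ (w : Matrix (Fin n) (Fin n) ℝ) :=
        fun h => hzw (Subtype.ext h)
      have hp : ∃ p : Fin n × Fin n,
          (z : Matrix (Fin n) (Fin n) ℝ) p.1 p.2 ≠ (w : Matrix (Fin n) (Fin n) ℝ) p.1 p.2 := by
        by_contra hcon
        push_neg at hcon
        exact hne (by ext i j; exact hcon (i, j))
      obtain ⟨p, hp⟩ := hp
      refine ⟨⇑(Ψ (MvPolynomial.X p)), ⟨Ψ (MvPolynomial.X p), ⟨⟨MvPolynomial.X p, rfl⟩, rfl⟩⟩, ?_⟩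
      simpa [hΨeval, hcoords] using hp
    obtain ⟨g', hg'⟩ :=
      ContinuousMap.exists_mem_subalgebra_near_continuous_of_separatesPoints Ψ.range hA_sep
        (fun z : ↥Cs => f (z : Matrix (Fin n) (Fin n) ℝ))
        (f.continuous.comp continuous_subtype_val) (1/3) (by norm_num)
    obtain ⟨g'', hg''⟩ := g'
    obtain ⟨P₀, hP₀⟩ := hg''
    have hnear : ∀ z : ↥Cs,
        |eval (coords (z : Matrix (Fin n) (Fin n) ℝ)) P₀
          - f (z : Matrix (Fin n) (Fin n) ℝ)| < 1/3 := by
      intro z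
      have h := hg' z
      rw [Real.norm_eq_abs] at h
      have : g'' z = eval (coords (z : Matrix (Fin n) (Fin n) ℝ)) P₀ := by
        rw [← hP₀]; exact hΨeval P₀ z
      rwa [this] at h
    -- averaging over the group
    obtain ⟨F, hF⟩ := aux_mul_poly P₀
    set w : K → Fin n × Fin n → ℝ := fun g => coords (Φ (g : GL (Fin n) ℝ)) with hw
    have hint : ∀ cp : MvPolynomial (Fin n × Fin n) ℝ,
        Integrable (fun g : K => eval (w g) cp) μ := by
      intro cp
      refine Continuous.integrable_of_hasCompactSupport ?_ (HasCompactSupport.of_compactSpace _)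
      exact Continuous.comp (g := fun v : Fin n × Fin n → ℝ => eval v cp)
        (MvPolynomial.continuous_eval cp) (hcoords_cont.comp hΦcont)
    obtain ⟨Q, hQ⟩ := aux_integral_poly μ F w hint
    have key : ∀ y : Matrix (Fin n) (Fin n) ℝ,
        ∫ g : K, eval (coords (y * Φ (g : GL (Fin n) ℝ))) P₀ ∂μ = eval (coords y) Q := by
      intro y
      rw [← hQ (coords y)]
      refine integral_congr_ae (Filter.Eventually.of_forall fun g => ?_)
      exact (hF y (Φ (g : GL (Fin n) ℝ))).symm
    set c : ℝ := ∫ g : K, eval (w g) P₀ ∂μ with hc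
    have hconst : ∀ k : K, eval (coords (Φ (k : GL (Fin n) ℝ))) Q = c := by
      intro k
      rw [← key (Φ (k : GL (Fin n) ℝ))]
      calc ∫ g : K, eval (coords (Φ (k : GL (Fin n) ℝ) * Φ (g : GL (Fin n) ℝ))) P₀ ∂μ
          = ∫ g : K, (fun g' : K => eval (w g') P₀) (k * g) ∂μ := rfl
        _ = ∫ g : K, eval (w g) P₀ ∂μ :=
            integral_mul_left_eq_self (fun g' : K => eval (w g') P₀) k
    have hSsub : S ⊆ Cs := Set.subset_union_left
    have hT2sub : T2 ⊆ Cs := Set.subset_union_right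
    have hcbound : |c| ≤ 1/3 * (μ Set.univ).toReal := by
      rw [hc]
      have hb : ∀ᵐ g : K ∂μ, ‖eval (w g) P₀‖ ≤ 1/3 := by
        refine Filter.Eventually.of_forall fun g => ?_
        have hzS : Φ (g : GL (Fin n) ℝ) ∈ S := ⟨(g : GL (Fin n) ℝ), g.2, rfl⟩
        have h := hnear ⟨Φ (g : GL (Fin n) ℝ), hSsub hzS⟩
        have hfz : f (Φ (g : GL (Fin n) ℝ)) = 0 := hf0 hzS
        rw [Real.norm_eq_abs]
        have : |eval (coords (Φ (g : GL (Fin n) ℝ))) P₀ - 0| < 1/3 := by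
          rw [← hfz]; exact h
        rw [sub_zero] at this
        exact le_of_lt this
      have := norm_integral_le_of_norm_le_const hb
      rwa [Real.norm_eq_abs] at this
    have hint2 : Integrable (fun g : K => eval (coords (X * Φ (g : GL (Fin n) ℝ))) P₀) μ := by
      refine Continuous.integrable_of_hasCompactSupport ?_ (HasCompactSupport.of_compactSpace _)
      refine Continuous.comp (g := fun v : Fin n × Fin n → ℝ => eval v P₀)
        (MvPolynomial.continuous_eval P₀) (hcoords_cont.comp ?_)
      exact continuous_const.matrix_mul hΦcont
    have hlow : 2/3 * (μ Set.univ).toReal ≤ eval (coords X) Q := by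
      rw [← key X]
      have hpt : ∀ g : K, (2:ℝ)/3 ≤ eval (coords (X * Φ (g : GL (Fin n) ℝ))) P₀ := by
        intro g
        have hzT : X * Φ (g : GL (Fin n) ℝ) ∈ T2 :=
          ⟨Φ (g : GL (Fin n) ℝ), ⟨(g : GL (Fin n) ℝ), g.2, rfl⟩, rfl⟩
        have h := hnear ⟨X * Φ (g : GL (Fin n) ℝ), hT2sub hzT⟩
        have hfz : f (X * Φ (g : GL (Fin n) ℝ)) = 1 := hf1 hzT
        rw [hfz] at h
        have := abs_lt.mp h
        linarith [this.1]
      calc (2:ℝ)/3 * (μ Set.univ).toReal = ∫ _g : K, (2:ℝ)/3 ∂μ := by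
            rw [integral_const, smul_eq_mul, mul_comm]; rfl
        _ ≤ ∫ g : K, eval (coords (X * Φ (g : GL (Fin n) ℝ))) P₀ ∂μ :=
            integral_mono (integrable_const _) hint2 hpt
    refine ⟨Q - MvPolynomial.C c, ?_, ?_⟩
    · rintro s ⟨k, hk, rfl⟩
      have := hconst ⟨k, hk⟩
      simp [this]
    · have heval : eval (coords X) (Q - MvPolynomial.C c) = eval (coords X) Q - c := by simp
      rw [heval]
      have hcle : c ≤ 1/3 * (μ Set.univ).toReal := le_of_abs_le hcbound
      intro h0
      have : eval (coords X) Q = c := by linarith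
      nlinarith [hμpos, hlow, hcle]
  -- Hilbert basis argument
  have : ∃ (T : Finset (MvPolynomial (Fin n × Fin n) ℝ)),
      Ideal.span (T : Set (MvPolynomial (Fin n × Fin n) ℝ))
        = MvPolynomial.vanishingIdeal ℝ (coords '' S) := by
    exact IsNoetherian.noetherian _
  obtain ⟨T, hT⟩ := this
  refine ⟨T.card, fun i => (T.equivFin.symm i : MvPolynomial (Fin n × Fin n) ℝ), ?_⟩
  ext X
  constructor
  · rintro hXS i
    have hmem : ((T.equivFin.symm i : MvPolynomial (Fin n × Fin n) ℝ))
        ∈ MvPolynomial.vanishingIdeal ℝ (coords '' S) := by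
      rw [← hT]
      exact Ideal.subset_span (T.equivFin.symm i).2
    exact (MvPolynomial.mem_vanishingIdeal_iff.mp hmem) _ ⟨X, hXS, rfl⟩
  · intro hXz
    by_contra hXS
    obtain ⟨Q, hQ0, hQX⟩ := hsep X hXS
    have hQmem : Q ∈ MvPolynomial.vanishingIdeal ℝ (coords '' S) := by
      rw [MvPolynomial.mem_vanishingIdeal_iff]
      rintro v ⟨s, hs, rfl⟩
      exact hQ0 s hs
    rw [← hT] at hQmem
    -- eval at coords X kills the span of T
    have : Ideal.span (T : Set (MvPolynomial (Fin n × Fin n) ℝ))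
        ≤ RingHom.ker (eval (coords X)) := by
      rw [Ideal.span_le]
      intro t ht
      have : eval (coords X) t = 0 := by
        have := hXz (T.equivFin ⟨t, ht⟩)
        simpa using this
      exact this
    exact hQX (this hQmem)
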